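/- (Asymptotic hook-length formula.) Let j ≥ 1 and let μ = (λ₂ ≥ λ₃ ≥ …) be a fixed partition of j. For n large enough that n − j ≥ λ₂, let λ(n) = (n−j, λ₂, λ₃, …), a partition of n. Then there exists a constant C > 0 such that for all sufficiently large n, | d_{λ(n)} − C(n,j)·d_μ·(1 − j/n) | ≤ C · C(n,j) · d_μ / n²; in particular d_{λ(n)} = C(n,j)·d_μ·(1 − j/n + O(1/n²)) as n → ∞. -/

import Mathlib

open Finset

/-- The number of standard Young tableaux of shape `μ`. -/
noncomputable def sytCard (μ : YoungDiagram) : ℕ :=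
  Nat.card {f : {c // c ∈ μ.cells} → Fin μ.card //
    Function.Bijective f ∧
    (∀ a b : {c // c ∈ μ.cells}, a.1.1 = b.1.1 → a.1.2 < b.1.2 → f a < f b) ∧
    (∀ a b : {c // c ∈ μ.cells}, a.1.2 = b.1.2 → a.1.1 < b.1.1 → f a < f b)}

/-- The Young diagram of a partition of `n`. -/
noncomputable def Nat.Partition.toYD {n : ℕ} (p : n.Partition) : YoungDiagram :=
  YoungDiagram.ofRowLens (p.parts.sort (· ≥ ·)) (List.sortedGE_iff_pairwise.mpr (Multiset.pairwise_sort ..))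

/-- The dimension `d_λ`: the number of standard Young tableaux of shape `λ`. -/
noncomputable def dPart {n : ℕ} (p : n.Partition) : ℕ := sytCard p.toYD

lemma card_ofRowLens (w : List ℕ) (hw : w.SortedGE) :
    (YoungDiagram.ofRowLens w hw).card = w.sum := by
  classical
  set μ := YoungDiagram.ofRowLens w hw with hμ
  have hcells : μ.cells = (Finset.univ : Finset (Fin w.length)).biUnion
      (fun i => μ.row i) := by
    ext c
    simp only [Finset.mem_biUnion, Finset.mem_univ, true_and, YoungDiagram.mem_row_iff]
    constructor
    · intro hc
      have hc' : c ∈ μ := hc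
      rw [hμ, YoungDiagram.mem_ofRowLens] at hc'
      obtain ⟨h1, _⟩ := hc'
      exact ⟨⟨c.1, h1⟩, hc, rfl⟩
    · rintro ⟨i, hc, _⟩
      exact hc
  have hdisj : ∀ i ∈ (Finset.univ : Finset (Fin w.length)), ∀ j ∈ Finset.univ, i ≠ j →
      Disjoint (μ.row i) (μ.row j) := by
    intro i _ j _ hij
    rw [Finset.disjoint_left]
    intro c hci hcj
    rw [YoungDiagram.mem_row_iff] at hci hcj
    exact hij (Fin.ext (hci.2 ▸ hcj.2.symm ▸ rfl))
  rw [YoungDiagram.card, hcells, Finset.card_biUnion hdisj]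
  have h1 : ∀ i : Fin w.length, (μ.row i).card = w[i] := by
    intro i
    rw [← YoungDiagram.rowLen_eq_card, hμ, YoungDiagram.rowLen_ofRowLens]
  rw [Finset.sum_congr rfl (fun i _ => h1 i)]
  rw [← List.sum_ofFn (f := fun i : Fin w.length => w[i])]
  congr 1
  exact (List.ofFn_getElem (xs := w))

lemma toYD_card {n : ℕ} (p : n.Partition) : p.toYD.card = n := by
  rw [Nat.Partition.toYD, card_ofRowLens]
  conv_rhs => rw [← p.parts_sum, ← Multiset.sort_eq p.parts (· ≥ ·)]
  exact Multiset.sum_coe _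

lemma mem_card_bounds {D : YoungDiagram} {c : ℕ × ℕ} (h : c ∈ D) :
    c.1 < D.card ∧ c.2 < D.card := by
  constructor
  · have hsub : (Finset.Iic c.1).image (fun t => (t, c.2)) ⊆ D.cells := by
      intro x hx
      simp only [Finset.mem_image, Finset.mem_Iic] at hx
      obtain ⟨t, ht, rfl⟩ := hx
      exact D.up_left_mem ht le_rfl h
    have := Finset.card_le_card hsub
    rwa [Finset.card_image_of_injective _ (fun a b hab => by simpa using hab),
      Nat.card_Iic, Nat.succ_le_iff] at this
  · have hsub : (Finset.Iic c.2).image (fun t => (c.1, t)) ⊆ D.cells := by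
      intro x hx
      simp only [Finset.mem_image, Finset.mem_Iic] at hx
      obtain ⟨t, ht, rfl⟩ := hx
      exact D.up_left_mem le_rfl ht h
    have := Finset.card_le_card hsub
    rwa [Finset.card_image_of_injective _ (fun a b hab => by simpa using hab),
      Nat.card_Iic, Nat.succ_le_iff] at this

lemma sort_cons (a : ℕ) (s : Multiset ℕ) (h : ∀ b ∈ s, b ≤ a) :
    (a ::ₘ s).sort (· ≥ ·) = a :: s.sort (· ≥ ·) := by
  exact Multiset.sort_cons a s (· ≥ ·) h

lemma mem_lam_toYD {n j : ℕ} (μ : Nat.Partition j) (lam : Nat.Partition n)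
    (hparts : lam.parts = (n - j) ::ₘ μ.parts) (hle : ∀ a ∈ μ.parts, a ≤ n - j)
    (i k : ℕ) :
    (i, k) ∈ lam.toYD ↔ (i = 0 ∧ k < n - j) ∨ (0 < i ∧ (i - 1, k) ∈ μ.toYD) := by
  rw [Nat.Partition.toYD, YoungDiagram.mem_ofRowLens]
  rw [Nat.Partition.toYD, YoungDiagram.mem_ofRowLens]
  rw [hparts, sort_cons _ _ hle]
  rcases i with _ | i'
  · simp
  · simp only [List.length_cons, Nat.add_lt_add_iff_right, Nat.succ_ne_zero, false_and,
      Nat.succ_sub_one, false_or]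
    constructor
    · rintro ⟨h1, h2⟩
      refine ⟨Nat.succ_pos _, ?_⟩
      exact ⟨by simpa using h1, by simpa using h2⟩
    · rintro ⟨_, h1, h2⟩
      exact ⟨by simpa using h1, by simpa using h2⟩


def IsFilling (D : YoungDiagram) (m : ℕ) (g : {c // c ∈ D.cells} → Fin m) : Prop :=
  Function.Injective g ∧
  (∀ a b : {c // c ∈ D.cells}, a.1.1 = b.1.1 → a.1.2 < b.1.2 → g a < g b) ∧
  (∀ a b : {c // c ∈ D.cells}, a.1.2 = b.1.2 → a.1.1 < b.1.1 → g a < g b)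

def Fillings (D : YoungDiagram) (m : ℕ) : Type :=
  {g : {c // c ∈ D.cells} → Fin m // IsFilling D m g}

def im {D : YoungDiagram} {m : ℕ} (g : {c // c ∈ D.cells} → Fin m) : Finset (Fin m) :=
  Finset.univ.image g

lemma im_card {D : YoungDiagram} {m : ℕ} {g : {c // c ∈ D.cells} → Fin m}
    (hg : Function.Injective g) : (im g).card = D.card := by
  rw [im, Finset.card_image_of_injective _ hg, Finset.card_univ, Fintype.card_coe]

lemma mem_im {D : YoungDiagram} {m : ℕ} (g : {c // c ∈ D.cells} → Fin m)
    (c : {c // c ∈ D.cells}) : g c ∈ im g := Finset.mem_image_of_mem _ (Finset.mem_univ c)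

lemma orderEmbOfFin_congr {m : ℕ} {s t : Finset (Fin m)} (h : s = t) {k : ℕ} (hs : s.card = k)
    (ht : t.card = k) (i : Fin k) : s.orderEmbOfFin hs i = t.orderEmbOfFin ht i := by
  subst h; rfl

noncomputable def mkT {D : YoungDiagram} {m : ℕ} (g : {c // c ∈ D.cells} → Fin m)
    (hg : Function.Injective g) : {c // c ∈ D.cells} → Fin D.card :=
  fun c => ((im g).orderIsoOfFin (im_card hg)).symm ⟨g c, mem_im g c⟩

lemma mkT_filling {D : YoungDiagram} {m : ℕ} {g : {c // c ∈ D.cells} → Fin m}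
    (hg : IsFilling D m g) : IsFilling D D.card (mkT g hg.1) := by
  obtain ⟨hinj, hrow, hcol⟩ := hg
  have key : ∀ a b, g a < g b → mkT g hinj a < mkT g hinj b := by
    intro a b hab
    simp only [mkT]
    rw [OrderIso.lt_iff_lt]
    exact Subtype.mk_lt_mk.mpr hab
  refine ⟨?_, fun a b h1 h2 => key a b (hrow a b h1 h2),
    fun a b h1 h2 => key a b (hcol a b h1 h2)⟩
  intro a b hab
  apply hinj
  exact Subtype.ext_iff.mp (((im g).orderIsoOfFin (im_card hinj)).symm.injective hab)

def fromPair {D : YoungDiagram} {m : ℕ} (S : Finset (Fin m)) (hS : S.card = D.card)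
    (T : {c // c ∈ D.cells} → Fin D.card) : {c // c ∈ D.cells} → Fin m :=
  fun c => S.orderEmbOfFin hS (T c)

lemma fromPair_filling {D : YoungDiagram} {m : ℕ} {S : Finset (Fin m)} (hS : S.card = D.card)
    {T : {c // c ∈ D.cells} → Fin D.card} (hT : IsFilling D D.card T) :
    IsFilling D m (fromPair S hS T) := by
  obtain ⟨hinj, hrow, hcol⟩ := hT
  have hmono := (S.orderEmbOfFin hS).strictMono
  exact ⟨fun a b hab => hinj ((S.orderEmbOfFin hS).injective hab),
    fun a b h1 h2 => hmono (hrow a b h1 h2),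
    fun a b h1 h2 => hmono (hcol a b h1 h2)⟩

lemma surj_of_filling {D : YoungDiagram} {T : {c // c ∈ D.cells} → Fin D.card}
    (hinj : Function.Injective T) : Function.Surjective T := by
  have := Fintype.bijective_iff_injective_and_card T
  simp only [Fintype.card_coe, Fintype.card_fin, and_true] at this
  exact (this.mpr hinj).2

lemma im_fromPair {D : YoungDiagram} {m : ℕ} {S : Finset (Fin m)} (hS : S.card = D.card)
    {T : {c // c ∈ D.cells} → Fin D.card} (hT : IsFilling D D.card T) :
    im (fromPair S hS T) = S := by
  apply Finset.eq_of_subset_of_card_le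
  · intro x hx
    simp only [im, Finset.mem_image] at hx
    obtain ⟨c, _, rfl⟩ := hx
    exact Finset.orderEmbOfFin_mem _ _ _
  · rw [hS, im_card (fromPair_filling hS hT).1]

lemma fromPair_mkT {D : YoungDiagram} {m : ℕ} {g : {c // c ∈ D.cells} → Fin m}
    (hg : Function.Injective g) :
    fromPair (im g) (im_card hg) (mkT g hg) = g := by
  funext c
  rw [fromPair, mkT, ← Finset.coe_orderIsoOfFin_apply, OrderIso.apply_symm_apply]

lemma mkT_fromPair {D : YoungDiagram} {m : ℕ} {S : Finset (Fin m)} (hS : S.card = D.card)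
    {T : {c // c ∈ D.cells} → Fin D.card} (hT : IsFilling D D.card T)
    (hh : Function.Injective (fromPair S hS T)) :
    mkT (fromPair S hS T) hh = T := by
  funext c
  rw [mkT]
  apply ((im (fromPair S hS T)).orderIsoOfFin (im_card hh)).injective
  rw [OrderIso.apply_symm_apply]
  apply Subtype.ext
  rw [Finset.coe_orderIsoOfFin_apply]
  exact orderEmbOfFin_congr (im_fromPair hS hT).symm hS (im_card hh) (T c)

noncomputable def decomp (D : YoungDiagram) (m : ℕ) :
    Fillings D m ≃ {S : Finset (Fin m) // S.card = D.card} × Fillings D D.card where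
  toFun g := ⟨⟨im g.1, im_card g.2.1⟩, ⟨mkT g.1 g.2.1, mkT_filling g.2⟩⟩
  invFun ST := ⟨fromPair ST.1.1 ST.1.2 ST.2.1, fromPair_filling ST.1.2 ST.2.2⟩
  left_inv g := Subtype.ext (fromPair_mkT g.2.1)
  right_inv ST := by
    refine Prod.ext (Subtype.ext ?_) (Subtype.ext ?_)
    · exact im_fromPair ST.1.2 ST.2.2
    · exact mkT_fromPair ST.1.2 ST.2.2 (fromPair_filling ST.1.2 ST.2.2).1

lemma decomp_fst {D : YoungDiagram} {m : ℕ} (g : Fillings D m) :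
    ((decomp D m) g).1.1 = im g.1 := rfl



lemma orderEmbOfFin_lt_iff {n m : ℕ} (s : Finset (Fin n)) (h : s.card = m) (k : Fin m)
    (y : Fin n) :
    s.orderEmbOfFin h k < y ↔ (k : ℕ) + 1 ≤ (s.filter (· < y)).card := by
  set e := s.orderEmbOfFin h with he
  constructor
  · intro hlt
    have hsub : (Finset.Iic k).image e ⊆ s.filter (· < y) := by
      intro x hx
      simp only [Finset.mem_image, Finset.mem_Iic] at hx
      obtain ⟨i, hi, rfl⟩ := hx
      rw [Finset.mem_filter]
      exact ⟨Finset.orderEmbOfFin_mem _ _ _,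
        lt_of_le_of_lt (e.monotone hi) hlt⟩
    have := Finset.card_le_card hsub
    rwa [Finset.card_image_of_injective _ e.injective, Fin.card_Iic] at this
  · intro hcard
    by_contra hyle
    push_neg at hyle
    have hsub : s.filter (· < y) ⊆ (Finset.Iio k).image e := by
      intro x hx
      rw [Finset.mem_filter] at hx
      obtain ⟨hxs, hxy⟩ := hx
      have : x ∈ Set.range e := by rw [he, Finset.range_orderEmbOfFin]; exact hxs
      obtain ⟨i, rfl⟩ := this
      simp only [Finset.mem_image, Finset.mem_Iio]
      refine ⟨i, ?_, rfl⟩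
      rw [← e.lt_iff_lt]
      exact lt_of_lt_of_le hxy hyle
    have := Finset.card_le_card hsub
    rw [Finset.card_image_of_injective _ e.injective, Fin.card_Iio] at this
    omega
lemma corner_mem {D : YoungDiagram} (hD : 0 < D.card) : (0, 0) ∈ D.cells := by
  rw [Finset.card_pos] at hD
  obtain ⟨c, hc⟩ := hD
  exact D.up_left_mem (Nat.zero_le _) (Nat.zero_le _) (show (c.1, c.2) ∈ D from hc)

-- new material
def Compat {D : YoungDiagram} {m : ℕ} (g : {c // c ∈ D.cells} → Fin m) : Prop :=
  ∀ k (h : (0, k) ∈ D.cells),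
    k + 1 ≤ (((im g)ᶜ).filter (· < g ⟨(0, k), h⟩)).card

def LamShape (j n : ℕ) (D Lam : YoungDiagram) : Prop :=
  ∀ i k : ℕ, (i, k) ∈ Lam ↔ (i = 0 ∧ k < n - j) ∨ (0 < i ∧ (i - 1, k) ∈ D)

section Main

variable {j n : ℕ} {D Lam : YoungDiagram}

lemma lam_row0 (hm : LamShape j n D Lam) {k : ℕ} (h : (0, k) ∈ Lam.cells) : k < n - j := by
  have := (hm 0 k).mp h
  simpa using this

lemma lam_row0' (hm : LamShape j n D Lam) {k : ℕ} (h : k < n - j) : (0, k) ∈ Lam.cells := by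
  rw [YoungDiagram.mem_cells, hm]
  exact Or.inl ⟨rfl, h⟩

lemma lam_up (hm : LamShape j n D Lam) {i k : ℕ} (hi : 0 < i) (h : (i, k) ∈ Lam.cells) :
    (i - 1, k) ∈ D.cells := by
  have := (hm i k).mp h
  rcases this with ⟨h1, _⟩ | ⟨_, h2⟩
  · omega
  · exact h2

lemma lam_up' (hm : LamShape j n D Lam) {i k : ℕ} (h : (i, k) ∈ D.cells) :
    (i + 1, k) ∈ Lam.cells := by
  rw [YoungDiagram.mem_cells, hm]
  exact Or.inr ⟨Nat.succ_pos _, by simpa using h⟩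

lemma cell_eta {Y : YoungDiagram} (c : {c // c ∈ Y.cells}) :
    ((c.1.1, c.1.2) : ℕ × ℕ) ∈ Y.cells := by
  rw [Prod.mk.eta]; exact c.2

def upCell (hm : LamShape j n D Lam) (c : {c // c ∈ D.cells}) : {c // c ∈ Lam.cells} :=
  ⟨(c.1.1 + 1, c.1.2), lam_up' hm (cell_eta c)⟩

def fwd (hm : LamShape j n D Lam) (f : {c // c ∈ Lam.cells} → Fin n) :
    {c // c ∈ D.cells} → Fin n :=
  fun c => f (upCell hm c)

lemma fwd_filling (hm : LamShape j n D Lam) {f : {c // c ∈ Lam.cells} → Fin n}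
    (hf : IsFilling Lam n f) : IsFilling D n (fwd hm f) := by
  obtain ⟨hinj, hrow, hcol⟩ := hf
  refine ⟨?_, ?_, ?_⟩
  · intro a b hab
    have := hinj hab
    rw [upCell, upCell, Subtype.mk_eq_mk, Prod.mk.injEq] at this
    exact Subtype.ext (Prod.ext (by omega) this.2)
  · intro a b h1 h2
    exact hrow (upCell hm a) (upCell hm b) (by simp only [upCell]; omega) h2
  · intro a b h1 h2
    exact hcol (upCell hm a) (upCell hm b) h1 (by simp only [upCell]; omega)

lemma fwd_compat (hm : LamShape j n D Lam) (hDj : D.card = j) (hjn : j ≤ n - j)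
    {f : {c // c ∈ Lam.cells} → Fin n} (hf : IsFilling Lam n f) : Compat (fwd hm f) := by
  obtain ⟨hinj, hrow, hcol⟩ := hf
  intro k hk
  have hkj : k < n - j := by
    have := (mem_card_bounds (show ((0:ℕ), k) ∈ D from hk)).2
    omega
  set y := fwd hm f ⟨(0, k), hk⟩ with hy
  have hrow0mem : ∀ t : ℕ, t ≤ k → (((0:ℕ), t) : ℕ × ℕ) ∈ Lam.cells := by
    intro t ht
    exact lam_row0' hm (by omega)
  have hsub : (Finset.Iic k).attach.image
      (fun t => f ⟨(0, t.1), hrow0mem t.1 (Finset.mem_Iic.mp t.2)⟩)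
      ⊆ ((im (fwd hm f))ᶜ).filter (· < y) := by
    intro x hx
    simp only [Finset.mem_image, Finset.mem_attach, true_and] at hx
    obtain ⟨⟨t, ht⟩, rfl⟩ := hx
    rw [Finset.mem_Iic] at ht
    rw [Finset.mem_filter, Finset.mem_compl]
    constructor
    · intro hmem
      rw [im, Finset.mem_image] at hmem
      obtain ⟨c, _, hc⟩ := hmem
      rw [fwd] at hc
      have := hinj hc
      have h2 := congrArg (fun z => z.1.1) this
      simp only [upCell] at h2
      omega
    · -- f (0,t) < y = f (1, k)
      have step1 : f ⟨(0, t), hrow0mem t ht⟩ ≤ f ⟨(0, k), hrow0mem k le_rfl⟩ := by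
        rcases eq_or_lt_of_le ht with rfl | hlt
        · exact le_of_eq rfl
        · exact le_of_lt (hrow _ _ rfl hlt)
      have step2 : f ⟨(0, k), hrow0mem k le_rfl⟩ < y := by
        rw [hy, fwd]
        exact hcol _ ⟨((0:ℕ)+1, k), (upCell hm ⟨(0,k), hk⟩).2⟩ rfl (by norm_num)
      exact lt_of_le_of_lt step1 step2
  have hcard := Finset.card_le_card hsub
  have hinj2 : Function.Injective
      (fun t : {x // x ∈ Finset.Iic k} => f ⟨(0, t.1), hrow0mem t.1 (Finset.mem_Iic.mp t.2)⟩) := by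
    intro a b hab
    have := hinj hab
    rw [Subtype.mk_eq_mk, Prod.mk.injEq] at this
    exact Subtype.ext this.2
  rw [Finset.card_image_of_injective _ hinj2, Finset.card_attach, Nat.card_Iic] at hcard
  exact hcard

end Main

section Back

variable {j n : ℕ} {D Lam : YoungDiagram}

lemma compl_card (hDj : D.card = j) (hjn : j ≤ n - j) {g : {c // c ∈ D.cells} → Fin n}
    (hg : Function.Injective g) : ((im g)ᶜ).card = n - j := by
  rw [Finset.card_compl, im_card hg, hDj, Fintype.card_fin]

noncomputable def bwd (hm : LamShape j n D Lam) (hDj : D.card = j) (hjn : j ≤ n - j)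
    (g : {c // c ∈ D.cells} → Fin n) (hg : Function.Injective g) :
    {c // c ∈ Lam.cells} → Fin n :=
  fun c =>
    if h0 : c.1.1 = 0 then
      ((im g)ᶜ).orderEmbOfFin (compl_card hDj hjn hg)
        ⟨c.1.2, lam_row0 hm (by rw [← h0]; exact cell_eta c)⟩
    else
      g ⟨(c.1.1 - 1, c.1.2), lam_up hm (Nat.pos_of_ne_zero h0) (cell_eta c)⟩

lemma bwd_mem_compl (hm : LamShape j n D Lam) (hDj : D.card = j) (hjn : j ≤ n - j)
    {g : {c // c ∈ D.cells} → Fin n} (hg : Function.Injective g)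
    (c : {c // c ∈ Lam.cells}) (h0 : c.1.1 = 0) : bwd hm hDj hjn g hg c ∈ (im g)ᶜ := by
  rw [bwd, dif_pos h0]
  exact Finset.orderEmbOfFin_mem _ _ _

lemma bwd_lt (hm : LamShape j n D Lam) (hDj : D.card = j) (hjn : j ≤ n - j)
    {g : {c // c ∈ D.cells} → Fin n} (hg : Function.Injective g) (hc : Compat g)
    {k : ℕ} (hk : k < n - j) (hkD : ((0:ℕ), k) ∈ D.cells) :
    ((im g)ᶜ).orderEmbOfFin (compl_card hDj hjn hg) ⟨k, hk⟩ < g ⟨(0, k), hkD⟩ := by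
  rw [orderEmbOfFin_lt_iff]
  exact hc k hkD

lemma bwd_filling (hm : LamShape j n D Lam) (hDj : D.card = j) (hjn : j ≤ n - j)
    {g : {c // c ∈ D.cells} → Fin n} (hgf : IsFilling D n g) (hc : Compat g) :
    IsFilling Lam n (bwd hm hDj hjn g hgf.1) := by
  obtain ⟨hinj, hrow, hcol⟩ := hgf
  have hmono := (((im g)ᶜ).orderEmbOfFin (compl_card hDj hjn hinj)).strictMono
  have key : ∀ (bi bk : ℕ) (hA : ((0:ℕ), bk) ∈ Lam.cells) (hB : (bi, bk) ∈ Lam.cells)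
      (hb : bi ≠ 0), bwd hm hDj hjn g hinj ⟨(0, bk), hA⟩ < bwd hm hDj hjn g hinj ⟨(bi, bk), hB⟩ := by
    intro bi bk hA hB hb
    rw [bwd, bwd]
    rw [dif_pos rfl, dif_neg hb]
    simp only
    have hbD : ((bi : ℕ) - 1, bk) ∈ D.cells := lam_up hm (Nat.pos_of_ne_zero hb) hB
    have h0k : ((0:ℕ), bk) ∈ D.cells := D.up_left_mem (Nat.zero_le _) le_rfl hbD
    have hlt := bwd_lt hm hDj hjn hinj hc (lam_row0 hm hA) h0k
    have h2 : g ⟨(0, bk), h0k⟩ ≤ g ⟨(bi - 1, bk), hbD⟩ := by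
      rcases Nat.eq_zero_or_pos (bi - 1) with hz | hpos
      · apply le_of_eq; congr 1
        exact Subtype.ext (Prod.ext hz.symm rfl)
      · exact le_of_lt (hcol _ _ rfl hpos)
    exact lt_of_lt_of_le hlt h2
  refine ⟨?_, ?_, ?_⟩
  · -- injective
    intro a b hab
    by_cases ha : a.1.1 = 0 <;> by_cases hb : b.1.1 = 0
    · rw [bwd, dif_pos ha, bwd, dif_pos hb] at hab
      have := hmono.injective hab
      rw [Fin.mk_eq_mk] at this
      exact Subtype.ext (Prod.ext (ha.trans hb.symm) this)
    · exfalso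
      have h1 := bwd_mem_compl hm hDj hjn hinj a ha
      rw [hab, bwd, dif_neg hb] at h1
      rw [Finset.mem_compl] at h1
      exact h1 (mem_im g _)
    · exfalso
      have h1 := bwd_mem_compl hm hDj hjn hinj b hb
      rw [← hab, bwd, dif_neg ha] at h1
      rw [Finset.mem_compl] at h1
      exact h1 (mem_im g _)
    · rw [bwd, dif_neg ha, bwd, dif_neg hb] at hab
      have := hinj hab
      rw [Subtype.mk_eq_mk, Prod.mk.injEq] at this
      exact Subtype.ext (Prod.ext (by omega) this.2)
  · -- rows
    intro a b h1 h2
    by_cases ha : a.1.1 = 0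
    · have hb : b.1.1 = 0 := by omega
      rw [bwd, dif_pos ha, bwd, dif_pos hb]
      exact hmono (by simpa using h2)
    · have hb : b.1.1 ≠ 0 := by omega
      rw [bwd, dif_neg ha, bwd, dif_neg hb]
      exact hrow _ _ (by simp; omega) h2
  · -- cols
    intro a b h1 h2
    by_cases ha : a.1.1 = 0
    · have hb : b.1.1 ≠ 0 := by omega
      obtain ⟨⟨ai, ak⟩, hA⟩ := a
      obtain ⟨⟨bi, bk⟩, hB⟩ := b
      simp only at ha hb h1 h2
      subst ha h1
      exact key bi ak hA hB hb
    · have hb : b.1.1 ≠ 0 := by omega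
      rw [bwd, dif_neg ha, bwd, dif_neg hb]
      exact hcol _ _ (by simpa using h1) (by simp; omega)

end Back

section Inv

variable {j n : ℕ} {D Lam : YoungDiagram}

lemma fwd_bwd (hm : LamShape j n D Lam) (hDj : D.card = j) (hjn : j ≤ n - j)
    {g : {c // c ∈ D.cells} → Fin n} (hinj : Function.Injective g) :
    fwd hm (bwd hm hDj hjn g hinj) = g := by
  funext c
  rw [fwd, bwd, dif_neg (by simp [upCell] : ¬ (upCell hm c).1.1 = 0)]
  congr 1

lemma bwd_fwd (hm : LamShape j n D Lam) (hDj : D.card = j) (hjn : j ≤ n - j)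
    {f : {c // c ∈ Lam.cells} → Fin n} (hf : IsFilling Lam n f)
    (hinj2 : Function.Injective (fwd hm f)) :
    bwd hm hDj hjn (fwd hm f) hinj2 = f := by
  obtain ⟨hinj, hrow, hcol⟩ := hf
  have hv : ∀ t : Fin (n - j), (((0:ℕ), (t : ℕ)) : ℕ × ℕ) ∈ Lam.cells :=
    fun t => lam_row0' hm t.2
  set v : Fin (n - j) → Fin n := fun t => f ⟨(0, (t : ℕ)), hv t⟩ with hvdef
  have hvmem : ∀ t, v t ∈ (im (fwd hm f))ᶜ := by
    intro t
    rw [Finset.mem_compl]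
    intro hmem
    rw [im, Finset.mem_image] at hmem
    obtain ⟨c, _, hcc⟩ := hmem
    rw [fwd] at hcc
    have := hinj hcc
    have h2 := congrArg (fun z => z.1.1) this
    simp only [upCell] at h2
    omega
  have hvmono : StrictMono v := by
    intro a b hab
    exact hrow _ _ rfl (by simpa using hab)
  have huniq := Finset.orderEmbOfFin_unique (compl_card hDj hjn hinj2) hvmem hvmono
  funext c
  obtain ⟨⟨i, k⟩, hC⟩ := c
  by_cases h0 : i = 0
  · subst h0
    rw [bwd, dif_pos rfl]
    simp only
    rw [← huniq]
  · rw [bwd, dif_neg (by simpa using h0)]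
    rw [fwd]
    congr 1
    exact Subtype.ext (Prod.ext (by simp [upCell]; omega) (by simp [upCell]))

noncomputable def lamEquiv (hm : LamShape j n D Lam) (hDj : D.card = j) (hjn : j ≤ n - j) :
    Fillings Lam n ≃ {g : Fillings D n // Compat g.1} where
  toFun f := ⟨⟨fwd hm f.1, fwd_filling hm f.2⟩, fwd_compat hm hDj hjn f.2⟩
  invFun g := ⟨bwd hm hDj hjn g.1.1 g.1.2.1, bwd_filling hm hDj hjn g.1.2 g.2⟩
  left_inv f := Subtype.ext (bwd_fwd hm hDj hjn f.2 (fwd_filling hm f.2).1)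
  right_inv g := Subtype.ext (Subtype.ext (fwd_bwd hm hDj hjn g.1.2.1))

end Inv


lemma sytCard_eq (D : YoungDiagram) {m : ℕ} (h : D.card = m) :
    sytCard D = Nat.card (Fillings D m) := by
  subst h
  apply Nat.card_congr
  apply Equiv.subtypeEquivRight
  intro f
  have hb : Function.Bijective f ↔ Function.Injective f := by
    rw [Fintype.bijective_iff_injective_and_card]
    simp [Fintype.card_coe]
  rw [IsFilling, hb]

instance fillingsFinite (D : YoungDiagram) (m : ℕ) : Finite (Fillings D m) := by
  unfold Fillings
  infer_instance

-- counting layer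
lemma nat_card_split {α : Type*} [Finite α] (p q : α → Prop) :
    Nat.card {x // p x} =
      Nat.card {x : α // p x ∧ q x} + Nat.card {x : α // p x ∧ ¬ q x} := by
  classical
  have e : {x : α // p x ∧ q x} ⊕ {x : α // p x ∧ ¬ q x} ≃ {x // p x} :=
    (Equiv.sumCongr (Equiv.subtypeSubtypeEquivSubtypeInter p q).symm
      (Equiv.subtypeSubtypeEquivSubtypeInter p (fun x => ¬ q x)).symm).trans
      (Equiv.sumCompl (fun y : {x // p x} => q y.1))
  rw [← Nat.card_congr e, Nat.card_sum]

def prodSubtypeFst {A B : Type*} (Q : A → Prop) : {y : A × B // Q y.1} ≃ {a : A // Q a} × B where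
  toFun y := (⟨y.1.1, y.2⟩, y.1.2)
  invFun ab := ⟨(ab.1.1, ab.2), ab.1.2⟩
  left_inv y := rfl
  right_inv ab := rfl

lemma count_by_S {D : YoungDiagram} {n : ℕ} (Q : Finset (Fin n) → Prop) :
    Nat.card {g : Fillings D n // Q (im g.1)} =
    Nat.card {S : Finset (Fin n) // S.card = D.card ∧ Q S} * Nat.card (Fillings D D.card) := by
  have e1 : {g : Fillings D n // Q (im g.1)} ≃
      {y : {S : Finset (Fin n) // S.card = D.card} × Fillings D D.card // Q y.1.1} :=
    Equiv.subtypeEquiv (decomp D n) (fun g => by rw [decomp_fst])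
  have e2 := (prodSubtypeFst (B := Fillings D D.card)
    (fun a : {S : Finset (Fin n) // S.card = D.card} => Q a.1))
  have e3 := Equiv.prodCongr
    (Equiv.subtypeSubtypeEquivSubtypeInter (fun S : Finset (Fin n) => S.card = D.card) Q)
    (Equiv.refl (Fillings D D.card))
  rw [Nat.card_congr ((e1.trans e2).trans e3), Nat.card_prod]

lemma count_by_S' {D : YoungDiagram} {n k : ℕ} (hk : D.card = k) (Q : Finset (Fin n) → Prop) :
    Nat.card {g : Fillings D n // Q (im g.1)} =
    Nat.card {S : Finset (Fin n) // S.card = k ∧ Q S} * Nat.card (Fillings D D.card) := by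
  subst hk
  exact count_by_S Q

lemma count_total (D : YoungDiagram) (n : ℕ) :
    Nat.card (Fillings D n) = n.choose D.card * Nat.card (Fillings D D.card) := by
  rw [Nat.card_congr (decomp D n), Nat.card_prod]
  congr 1
  rw [Nat.card_eq_fintype_card, Fintype.card_finset_len, Fintype.card_fin]

lemma count_S_zero {n j : ℕ} (hj : 1 ≤ j) (hn : 0 < n) :
    Nat.card {S : Finset (Fin n) // S.card = j ∧ (⟨0, hn⟩ : Fin n) ∈ S} =
      (n - 1).choose (j - 1) := by
  classical
  set z : Fin n := ⟨0, hn⟩ with hz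
  have hzmap : ∀ T : Finset {x : Fin n // x ≠ z},
      z ∉ T.map (Function.Embedding.subtype _) := by
    intro T hmem
    rw [Finset.mem_map] at hmem
    obtain ⟨x, _, hx⟩ := hmem
    exact x.2 (by simpa using hx)
  have e : {S : Finset (Fin n) // S.card = j ∧ z ∈ S} ≃
      {T : Finset {x : Fin n // x ≠ z} // T.card = j - 1} := {
    toFun := fun S => ⟨(S.1.erase z).subtype (· ≠ z), by
      rw [Finset.card_subtype, Finset.filter_true_of_mem
        (fun x hx => Finset.ne_of_mem_erase hx), Finset.card_erase_of_mem S.2.2, S.2.1]⟩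
    invFun := fun T => ⟨insert z (T.1.map (Function.Embedding.subtype _)), by
      constructor
      · rw [Finset.card_insert_of_notMem (hzmap T.1), Finset.card_map, T.2]
        omega
      · exact Finset.mem_insert_self _ _⟩
    left_inv := fun S => by
      apply Subtype.ext
      simp only
      rw [Finset.subtype_map, Finset.filter_true_of_mem (fun x hx => Finset.ne_of_mem_erase hx),
        Finset.insert_erase S.2.2]
    right_inv := fun T => by
      apply Subtype.ext
      simp only
      rw [Finset.erase_insert (hzmap T.1)]
      ext x
      rw [Finset.mem_subtype, Finset.mem_map]
      constructor
      · rintro ⟨y, hy, hxy⟩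
        have : y = x := Subtype.ext (by simpa using hxy)
        exact this ▸ hy
      · intro hx
        exact ⟨x, hx, rfl⟩ }
  rw [Nat.card_congr e, Nat.card_eq_fintype_card, Fintype.card_finset_len]
  congr 1
  have h1 : Fintype.card {x : Fin n // ¬ (x = z)} =
      Fintype.card (Fin n) - Fintype.card {x : Fin n // x = z} := Fintype.card_subtype_compl _
  simpa [Fintype.card_subtype_eq, Fintype.card_fin] using h1

section Big
variable {n j : ℕ}

def filt (S : Finset (Fin n)) (j : ℕ) : Finset (Fin n) := S.filter (fun x => (x : ℕ) < 2*j)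

noncomputable def selA (S : Finset (Fin n)) (j : ℕ) (h : 2 ≤ (filt S j).card) : Fin n :=
  (filt S j).min' (Finset.card_pos.mp (by omega))

noncomputable def selB (S : Finset (Fin n)) (j : ℕ) (h : 2 ≤ (filt S j).card) : Fin n :=
  ((filt S j).erase (selA S j h)).min' (Finset.card_pos.mp (by
    rw [Finset.card_erase_of_mem (show selA S j h ∈ filt S j from Finset.min'_mem _ _)]
    omega))

lemma selA_mem (S : Finset (Fin n)) (h : 2 ≤ (filt S j).card) : selA S j h ∈ filt S j :=
  Finset.min'_mem _ _

lemma selB_mem' (S : Finset (Fin n)) (h : 2 ≤ (filt S j).card) :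
    selB S j h ∈ (filt S j).erase (selA S j h) := Finset.min'_mem _ _

lemma selB_mem (S : Finset (Fin n)) (h : 2 ≤ (filt S j).card) : selB S j h ∈ filt S j :=
  Finset.mem_of_mem_erase (selB_mem' S h)

lemma selB_ne (S : Finset (Fin n)) (h : 2 ≤ (filt S j).card) : selB S j h ≠ selA S j h :=
  Finset.ne_of_mem_erase (selB_mem' S h)

lemma filt_sub (S : Finset (Fin n)) {x : Fin n} (hx : x ∈ filt S j) :
    x ∈ S ∧ (x : ℕ) < 2*j := Finset.mem_filter.mp hx

lemma recon (S : Finset (Fin n)) (h : 2 ≤ (filt S j).card) :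
    insert (selA S j h) (insert (selB S j h)
      ((S.erase (selA S j h)).erase (selB S j h))) = S := by
  rw [Finset.insert_erase (Finset.mem_erase.mpr
    ⟨selB_ne S h, (filt_sub S (selB_mem S h)).1⟩),
    Finset.insert_erase (filt_sub S (selA_mem S h)).1]

lemma count_S_big (hj : 1 ≤ j) :
    Nat.card {S : Finset (Fin n) // S.card = j ∧ 2 ≤ (filt S j).card} ≤
      2*j * (2*j) * n.choose (j-2) := by
  classical
  have hφ : Function.Injective
      (fun S : {S : Finset (Fin n) // S.card = j ∧ 2 ≤ (filt S j).card} =>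
        ((⟨(selA S.1 j S.2.2 : Fin n).1, by
            have := (filt_sub S.1 (selA_mem S.1 S.2.2)).2; omega⟩ : Fin (2*j)),
         (⟨(selB S.1 j S.2.2 : Fin n).1, by
            have := (filt_sub S.1 (selB_mem S.1 S.2.2)).2; omega⟩ : Fin (2*j)),
         (⟨(S.1.erase (selA S.1 j S.2.2)).erase (selB S.1 j S.2.2), by
            rw [Finset.card_erase_of_mem (Finset.mem_erase.mpr
              ⟨selB_ne S.1 S.2.2, (filt_sub S.1 (selB_mem S.1 S.2.2)).1⟩),
              Finset.card_erase_of_mem (filt_sub S.1 (selA_mem S.1 S.2.2)).1, S.2.1]⟩ :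
            {T : Finset (Fin n) // T.card = j - 1 - 1}))) := by
    intro S₁ S₂ h
    simp only [Prod.mk.injEq, Fin.mk.injEq, Subtype.mk.injEq] at h
    obtain ⟨h1, h2, h3⟩ := h
    have ha : selA S₁.1 j S₁.2.2 = selA S₂.1 j S₂.2.2 := Fin.ext h1
    have hb : selB S₁.1 j S₁.2.2 = selB S₂.1 j S₂.2.2 := Fin.ext h2
    apply Subtype.ext
    rw [ha, hb] at h3
    rw [← recon S₁.1 S₁.2.2, ← recon S₂.1 S₂.2.2, ha, hb, h3]
  have key := Nat.card_le_card_of_injective _ hφ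
  calc Nat.card {S : Finset (Fin n) // S.card = j ∧ 2 ≤ (filt S j).card} ≤ _ := key
    _ = 2*j * (2*j) * n.choose (j-2) := by
        rw [Nat.card_prod, Nat.card_prod, Nat.card_eq_fintype_card (α := Fin (2*j)),
          Fintype.card_fin, Nat.card_eq_fintype_card, Fintype.card_finset_len,
          Fintype.card_fin]
        have h12 : j - 1 - 1 = j - 2 := by omega
        rw [h12]
        ring

end Big

lemma corner_min {D : YoungDiagram} {m : ℕ} {g : {c // c ∈ D.cells} → Fin m}
    (hg : IsFilling D m g) (h00 : ((0:ℕ), (0:ℕ)) ∈ D.cells) (c : {c // c ∈ D.cells}) :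
    g ⟨(0, 0), h00⟩ ≤ g c := by
  obtain ⟨hinj, hrow, hcol⟩ := hg
  obtain ⟨⟨i, k⟩, hC⟩ := c
  have h0k : ((0:ℕ), k) ∈ D.cells := D.up_left_mem (Nat.zero_le _) le_rfl hC
  have step1 : g ⟨(0, 0), h00⟩ ≤ g ⟨(0, k), h0k⟩ := by
    rcases Nat.eq_zero_or_pos k with rfl | hk
    · rfl
    · exact le_of_lt (hrow _ _ rfl hk)
  have step2 : g ⟨(0, k), h0k⟩ ≤ g ⟨(i, k), hC⟩ := by
    rcases Nat.eq_zero_or_pos i with rfl | hi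
    · rfl
    · exact le_of_lt (hcol _ _ rfl hi)
  exact le_trans step1 step2

lemma zero_bad {j n : ℕ} {D : YoungDiagram} (hDj : D.card = j) (hj : 1 ≤ j) (hn : 0 < n)
    {g : {c // c ∈ D.cells} → Fin m} : True := trivial

lemma zero_not_compat {j n : ℕ} {D : YoungDiagram} (hDj : D.card = j) (hj : 1 ≤ j) (hn : 0 < n)
    {g : {c // c ∈ D.cells} → Fin n} (hgf : IsFilling D n g)
    (hmem : (⟨0, hn⟩ : Fin n) ∈ im g) : ¬ Compat g := by
  have h00 : ((0:ℕ), (0:ℕ)) ∈ D.cells := corner_mem (by omega)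
  rw [im, Finset.mem_image] at hmem
  obtain ⟨c, _, hc⟩ := hmem
  have hle := corner_min hgf h00 c
  rw [hc] at hle
  have hzero : g ⟨(0, 0), h00⟩ = ⟨0, hn⟩ := by
    apply Fin.ext
    have h0 : ((⟨0, hn⟩ : Fin n) : ℕ) = 0 := rfl
    have := hle
    simp only [Fin.le_def] at this
    omega
  intro hcompat
  have h1 := hcompat 0 h00
  rw [hzero] at h1
  have : ((im g)ᶜ).filter (· < (⟨0, hn⟩ : Fin n)) = ∅ := by
    apply Finset.filter_false_of_mem
    intro x _
    simp only [not_lt]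
    rw [Fin.le_def]
    exact Nat.zero_le _
  rw [this] at h1
  simp at h1

lemma bad_big {j n : ℕ} {D : YoungDiagram} (hDj : D.card = j) (hj : 1 ≤ j) (hn : 0 < n)
    {g : {c // c ∈ D.cells} → Fin n} (hgf : IsFilling D n g)
    (hnot : ¬ Compat g) (hz : (⟨0, hn⟩ : Fin n) ∉ im g) :
    2 ≤ (filt (im g) j).card := by
  obtain ⟨hinj, hrow, hcol⟩ := hgf
  rw [Compat] at hnot
  push_neg at hnot
  obtain ⟨k, hk, hcard⟩ := hnot
  have hkj : k < j := by have := (mem_card_bounds hk).2; omega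
  set y := g ⟨(0, k), hk⟩ with hy
  rcases Nat.eq_zero_or_pos k with rfl | hkpos
  · exfalso
    have hzc : (⟨0, hn⟩ : Fin n) ∈ (im g)ᶜ := Finset.mem_compl.mpr hz
    by_cases hlt : (⟨0, hn⟩ : Fin n) < y
    · have : (⟨0, hn⟩ : Fin n) ∈ ((im g)ᶜ).filter (· < y) :=
        Finset.mem_filter.mpr ⟨hzc, hlt⟩
      have := Finset.card_pos.mpr ⟨_, this⟩
      omega
    · rw [not_lt] at hlt
      have : y = ⟨0, hn⟩ := by
        apply Fin.ext
        have h0 : ((⟨0, hn⟩ : Fin n) : ℕ) = 0 := rfl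
        simp only [Fin.le_def] at hlt
        omega
      exact hz (this ▸ mem_im g _)
  · have h00 : ((0:ℕ), (0:ℕ)) ∈ D.cells := D.up_left_mem le_rfl (Nat.zero_le _) hk
    have h01 : ((0:ℕ), (1:ℕ)) ∈ D.cells := D.up_left_mem le_rfl hkpos hk
    set a := g ⟨(0, 0), h00⟩ with ha
    set b := g ⟨(0, 1), h01⟩ with hb
    have hab : a < b := hrow _ _ rfl Nat.zero_lt_one
    have hby : b ≤ y := by
      rcases eq_or_lt_of_le (Nat.succ_le_of_lt hkpos) with heq | hlt
      · apply le_of_eq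
        rw [hb, hy]
        congr 1
        exact Subtype.ext (Prod.ext rfl heq)
      · exact le_of_lt (hrow _ _ rfl hlt)
    -- bound on y
    have hybound : (y : ℕ) < 2*j := by
      have hpart := Finset.card_filter_add_card_filter_not
        (s := Finset.Iio y) (p := fun x => x ∈ im g)
      rw [Fin.card_Iio] at hpart
      have e2 : (Finset.Iio y).filter (fun x => ¬ x ∈ im g) = ((im g)ᶜ).filter (· < y) := by
        ext x
        simp only [Finset.mem_filter, Finset.mem_Iio, Finset.mem_compl]
        tauto
      rw [e2] at hpart
      have e1 : (Finset.Iio y).filter (fun x => x ∈ im g) ⊆ (im g).erase y := by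
        intro x hx
        rw [Finset.mem_filter, Finset.mem_Iio] at hx
        exact Finset.mem_erase.mpr ⟨ne_of_lt hx.1, hx.2⟩
      have hc1 := Finset.card_le_card e1
      rw [Finset.card_erase_of_mem (mem_im g _), im_card hinj, hDj] at hc1
      omega
    have hsub : ({a, b} : Finset (Fin n)) ⊆ filt (im g) j := by
      intro x hx
      rw [Finset.mem_insert, Finset.mem_singleton] at hx
      rw [filt, Finset.mem_filter]
      rcases hx with rfl | rfl
      · exact ⟨mem_im g _, by
          have : (a : ℕ) < (b : ℕ) := hab
          have : (b : ℕ) ≤ (y : ℕ) := hby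
          omega⟩
      · exact ⟨mem_im g _, by
          have : (b : ℕ) ≤ (y : ℕ) := hby
          omega⟩
    have := Finset.card_le_card hsub
    rwa [Finset.card_pair (ne_of_lt hab)] at this

lemma nat_card_compl_split {α : Type*} [Finite α] (p : α → Prop) :
    Nat.card {x // p x} + Nat.card {x // ¬ p x} = Nat.card α := by
  classical
  rw [← Nat.card_sum, Nat.card_congr (Equiv.sumCompl p)]

lemma choose_bound {n j : ℕ} (hj : 2 ≤ j) (hn : 4*j + 4 ≤ n) :
    n^2 * (2*j*(2*j) * n.choose (j-2)) ≤ 16*j^4 * n.choose j := by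
  have hjn : j ≤ n := by omega
  set a := n - j with hadef
  set b := j - 1 with hbdef
  have hb : b + 1 = j := by omega
  have hid1 : n.choose j * j = n.choose (j-1) * (a + 1) := by
    have := Nat.choose_succ_right_eq n (j-1)
    rw [show j - 1 + 1 = j by omega] at this
    rw [this]
    congr 1
    omega
  have hid2 : n.choose (j-1) * (j-1) = n.choose (j-2) * (a + 2) := by
    have := Nat.choose_succ_right_eq n (j-2)
    rw [show j - 2 + 1 = j - 1 by omega] at this
    rw [this]
    congr 1
    omega
  have hid : n.choose j * (j * b) = n.choose (j-2) * ((a+2)*(a+1)) := by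
    calc n.choose j * (j * b) = (n.choose j * j) * b := by ring
      _ = (n.choose (j-1) * (a+1)) * b := by rw [hid1]
      _ = (n.choose (j-1) * (j-1)) * (a+1) := by rw [hbdef]; ring
      _ = (n.choose (j-2) * (a+2)) * (a+1) := by rw [hid2]
      _ = _ := by ring
  have hn2 : n ≤ 2*(a+1) := by omega
  have hnsq : n^2 ≤ 4*((a+2)*(a+1)) := by nlinarith
  calc n^2 * (2*j*(2*j) * n.choose (j-2))
      ≤ (4*((a+2)*(a+1))) * (2*j*(2*j) * n.choose (j-2)) :=
        Nat.mul_le_mul_right _ hnsq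
    _ = 16*j^2 * (n.choose (j-2) * ((a+2)*(a+1))) := by ring
    _ = 16*j^2 * (n.choose j * (j * b)) := by rw [hid]
    _ ≤ 16*j^2 * (n.choose j * (j * j)) := by
        apply Nat.mul_le_mul_left
        apply Nat.mul_le_mul_left
        exact Nat.mul_le_mul_left _ (by omega)
    _ = 16*j^4 * n.choose j := by ring

/-- Asymptotic hook-length formula: for a fixed partition `μ` of `j ≥ 1`, letting
`λ(n) = (n−j, μ)` be the partition of `n` obtained by prepending a first row `n−j`,
one has `d_{λ(n)} = C(n,j)·d_μ·(1 − j/n + O(1/n²))` as `n → ∞`. -/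
theorem asymptotic_hook_length_formula (j : ℕ) (hj : 1 ≤ j) (μ : Nat.Partition j) :
    ∃ C : ℝ, 0 < C ∧ ∃ N : ℕ, ∀ n ≥ N, ∀ lam : Nat.Partition n,
      lam.parts = (n - j) ::ₘ μ.parts →
      |(dPart lam : ℝ) - (n.choose j : ℝ) * (dPart μ : ℝ) * (1 - (j : ℝ) / n)| ≤
        C * (n.choose j : ℝ) * (dPart μ : ℝ) / (n : ℝ) ^ 2 := by
  classical
  set D := μ.toYD with hD
  have hDj : D.card = j := toYD_card μ
  set dm := Nat.card (Fillings D D.card) with hdm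
  have hdPartμ : dPart μ = dm := by
    rw [dPart, ← hD, sytCard_eq D rfl]
  refine ⟨(16*j^4 : ℕ), by positivity, 4*j + 4, ?_⟩
  intro n hn lam hparts
  have hn0 : 0 < n := by omega
  have hjn : j ≤ n - j := by omega
  -- shape of lam
  have hle : ∀ a ∈ μ.parts, a ≤ n - j := by
    intro a ha
    have h1 : a ≤ μ.parts.sum := Multiset.single_le_sum (fun x _ => Nat.zero_le x) a ha
    rw [μ.parts_sum] at h1
    omega
  have hm : LamShape j n D lam.toYD := fun i k => mem_lam_toYD μ lam hparts hle i k
  have hΛ : lam.toYD.card = n := toYD_card lam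
  -- the counting
  set z : Fin n := ⟨0, hn0⟩ with hzdef
  have hdlam : dPart lam = Nat.card {g : Fillings D n // Compat g.1} := by
    rw [dPart, sytCard_eq lam.toYD hΛ]
    exact Nat.card_congr (lamEquiv hm hDj hjn)
  have htotal : Nat.card (Fillings D n) = n.choose j * dm := by
    calc Nat.card (Fillings D n) = n.choose D.card * dm := count_total D n
      _ = n.choose j * dm := by rw [hDj]
  have hsplit1 : Nat.card {g : Fillings D n // Compat g.1} +
      Nat.card {g : Fillings D n // ¬ Compat g.1} = n.choose j * dm := by
    rw [nat_card_compl_split, htotal]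
  have hsplit2 : Nat.card {g : Fillings D n // ¬ Compat g.1} =
      Nat.card {g : Fillings D n // ¬ Compat g.1 ∧ z ∈ im g.1} +
      Nat.card {g : Fillings D n // ¬ Compat g.1 ∧ z ∉ im g.1} :=
    nat_card_split _ _
  have hB0 : Nat.card {g : Fillings D n // ¬ Compat g.1 ∧ z ∈ im g.1} =
      (n-1).choose (j-1) * dm := by
    have e : {g : Fillings D n // ¬ Compat g.1 ∧ z ∈ im g.1} ≃
        {g : Fillings D n // z ∈ im g.1} :=
      Equiv.subtypeEquivRight (fun g =>
        ⟨fun h => h.2, fun h => ⟨zero_not_compat hDj hj hn0 g.2 h, h⟩⟩)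
    rw [Nat.card_congr e, count_by_S' hDj (fun S => z ∈ S), count_S_zero hj hn0]
  have hB1 : Nat.card {g : Fillings D n // ¬ Compat g.1 ∧ z ∉ im g.1} ≤
      2*j*(2*j) * n.choose (j-2) * dm := by
    have hstep : Nat.card {g : Fillings D n // ¬ Compat g.1 ∧ z ∉ im g.1} ≤
        Nat.card {g : Fillings D n // 2 ≤ (filt (im g.1) j).card} := by
      apply Nat.card_le_card_of_injective
        (fun x : {g : Fillings D n // ¬ Compat g.1 ∧ z ∉ im g.1} =>
          (⟨x.1, bad_big hDj hj hn0 x.1.2 x.2.1 x.2.2⟩ :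
            {g : Fillings D n // 2 ≤ (filt (im g.1) j).card}))
      intro a b h
      simp only [Subtype.mk.injEq] at h
      exact Subtype.ext h
    refine le_trans hstep ?_
    rw [count_by_S' hDj (fun S => 2 ≤ (filt S j).card)]
    exact Nat.mul_le_mul_right _ (count_S_big hj)
  -- real arithmetic
  set B0 := Nat.card {g : Fillings D n // ¬ Compat g.1 ∧ z ∈ im g.1} with hB0def
  set B1 := Nat.card {g : Fillings D n // ¬ Compat g.1 ∧ z ∉ im g.1} with hB1def
  have hchoose_id : n * ((n-1).choose (j-1)) = n.choose j * j := by
    have := Nat.add_one_mul_choose_eq (n-1) (j-1)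
    rw [show n - 1 + 1 = n by omega, show j - 1 + 1 = j by omega] at this
    exact this
  have hnR : (0:ℝ) < n := by exact_mod_cast hn0
  have hdlamR : (dPart lam : ℝ) = (n.choose j : ℝ) * dm - (B0 + B1) := by
    have : dPart lam + (B0 + B1) = n.choose j * dm := by
      rw [hdlam, ← hsplit2]
      exact hsplit1
    have := congrArg (fun x : ℕ => (x : ℝ)) this
    push_cast at this
    linarith
  have hB0R : (n.choose j : ℝ) * dm * ((j:ℝ)/n) = (B0 : ℝ) := by
    rw [hB0]
    have := congrArg (fun x : ℕ => (x : ℝ)) hchoose_id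
    push_cast at this
    field_simp
    push_cast
    nlinarith [this]
  have hmain : |(dPart lam : ℝ) - (n.choose j : ℝ) * (dPart μ : ℝ) * (1 - (j : ℝ) / n)| =
      (B1 : ℝ) := by
    rw [hdPartμ, hdlamR]
    have : (n.choose j : ℝ) * dm * (1 - (j:ℝ)/n) =
        (n.choose j : ℝ) * dm - (B0 : ℝ) := by
      rw [mul_sub, mul_one, hB0R]
    rw [this]
    rw [abs_of_nonpos (by push_cast; linarith [Nat.cast_nonneg (α := ℝ) B1])]
    push_cast
    ring
  rw [hmain, hdPartμ]
  rw [le_div_iff₀ (by positivity : (0:ℝ) < (n:ℝ)^2)]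
  have hnat : B1 * n^2 ≤ 16*j^4 * n.choose j * dm := by
    rcases eq_or_lt_of_le hj with h1 | h2
    · -- j = 1 : B1 = 0
      have hempty : IsEmpty {g : Fillings D n // ¬ Compat g.1 ∧ z ∉ im g.1} := by
        constructor
        intro x
        have h2f := bad_big hDj hj hn0 x.1.2 x.2.1 x.2.2
        have hsub : filt (im x.1.1) j ⊆ im x.1.1 := Finset.filter_subset _ _
        have hcc := Finset.card_le_card hsub
        rw [im_card x.1.2.1, hDj] at hcc
        omega
      have hz : B1 = 0 := by
        rw [hB1def]
        exact Nat.card_of_isEmpty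
      simp [hz]
    · have hj2 : 2 ≤ j := h2
      calc B1 * n^2 ≤ (2*j*(2*j) * n.choose (j-2) * dm) * n^2 :=
            Nat.mul_le_mul_right _ hB1
        _ = (n^2 * (2*j*(2*j) * n.choose (j-2))) * dm := by ring
        _ ≤ (16*j^4 * n.choose j) * dm :=
            Nat.mul_le_mul_right _ (choose_bound hj2 hn)
        _ = 16*j^4 * n.choose j * dm := rfl
  calc (B1:ℝ) * (n:ℝ)^2 = ((B1 * n^2 : ℕ) : ℝ) := by push_cast; ring
    _ ≤ ((16*j^4 * n.choose j * dm : ℕ) : ℝ) := by exact_mod_cast hnat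
    _ = ((16*j^4 : ℕ) : ℝ) * ((n.choose j : ℕ) : ℝ) * ((dm : ℕ) : ℝ) := by push_cast; ring
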